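/- Let c_r be as above with τ − c_r ~ 2/(ρΦ''(τ) r), and define d_1 = 1, d_r = ρ·Φ'(c_{r-1})·d_{r-1} + c_r/ρ for r > 1. Then d_r is increasing, d_r = O(r), and moreover d_r ~ (τ/(3ρ))·r as r → ∞. -/

import Mathlib

open Filter Topology

section helpers

lemma aux_bdd (m : ℕ) {q : ℝ} (h0 : 0 ≤ q) (h1 : q < 1) :
    ∃ C : ℝ, 0 ≤ C ∧ ∀ k : ℕ, (k : ℝ) ^ m * q ^ k ≤ C := by
  have hs : Summable (fun k : ℕ => (k : ℝ) ^ m * q ^ k) :=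
    summable_pow_mul_geometric_of_norm_lt_one m
      (by rwa [Real.norm_eq_abs, abs_of_nonneg h0])
  obtain ⟨C, hC⟩ := hs.tendsto_atTop_zero.bddAbove_range
  refine ⟨C, le_trans (by norm_num) (hC ⟨0, rfl⟩), fun k => hC ⟨k, rfl⟩⟩

lemma aux_summable (w : ℕ → ℝ) (hw : ∀ k, 0 ≤ w k) {s t : ℝ} (ht : 0 < t) (hts : t < s)
    (hsum : Summable fun k : ℕ => w k * s ^ k) (m : ℕ) :
    Summable fun k : ℕ => (k : ℝ) ^ m * w k * t ^ (k - m) := by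
  have hs0 : 0 < s := ht.trans hts
  have hq0 : 0 ≤ t / s := div_nonneg ht.le hs0.le
  have hq1 : t / s < 1 := (div_lt_one hs0).2 hts
  obtain ⟨C, hC0, hC⟩ := aux_bdd m hq0 hq1
  have hδ0 : 0 < min 1 t ^ m := pow_pos (lt_min one_pos ht) m
  refine Summable.of_nonneg_of_le (f := fun k => C / min 1 t ^ m * (w k * s ^ k))
    (fun k => mul_nonneg (mul_nonneg (by positivity) (hw k)) (by positivity))
    (fun k => ?_) (hsum.mul_left _)
  have h1 : t ^ (k - m) * t ^ min k m = t ^ k := by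
    rw [← pow_add]; congr 1; omega
  have h2 : min 1 t ^ m ≤ t ^ min k m := by
    calc min 1 t ^ m ≤ min 1 t ^ min k m :=
          pow_le_pow_of_le_one (le_min zero_le_one ht.le) (min_le_left 1 t) (min_le_right k m)
      _ ≤ t ^ min k m := pow_le_pow_left₀ (le_min zero_le_one ht.le) (min_le_right 1 t) _
  have h3 : t ^ (k - m) ≤ t ^ k / min 1 t ^ m := by
    rw [le_div_iff₀ hδ0]
    calc t ^ (k - m) * min 1 t ^ m ≤ t ^ (k - m) * t ^ min k m :=
          mul_le_mul_of_nonneg_left h2 (by positivity)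
      _ = t ^ k := h1
  have h4 : (k : ℝ) ^ m * t ^ k = s ^ k * ((k : ℝ) ^ m * (t / s) ^ k) := by
    field_simp
    have hsk : s ^ k ≠ 0 := pow_ne_zero _ hs0.ne'
    rw [div_pow]; field_simp
  calc (k : ℝ) ^ m * w k * t ^ (k - m) ≤ (k : ℝ) ^ m * w k * (t ^ k / min 1 t ^ m) := by
        exact mul_le_mul_of_nonneg_left h3 (mul_nonneg (by positivity) (hw k))
    _ = ((k : ℝ) ^ m * t ^ k) * w k / min 1 t ^ m := by ring
    _ = (s ^ k * ((k : ℝ) ^ m * (t / s) ^ k)) * w k / min 1 t ^ m := by rw [h4]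
    _ ≤ (s ^ k * C) * w k / min 1 t ^ m := by
        have hle : (s ^ k * ((k : ℝ) ^ m * (t / s) ^ k)) * w k ≤ (s ^ k * C) * w k :=
          mul_le_mul_of_nonneg_right
            (mul_le_mul_of_nonneg_left (hC k) (by positivity)) (hw k)
        exact div_le_div_of_nonneg_right hle hδ0.le
    _ = C / min 1 t ^ m * (w k * s ^ k) := by ring

lemma aux_contract (y γ e : ℕ → ℝ) (M : ℝ)
    (hM : ∀ r : ℕ, 1 ≤ r → |y r| ≤ M)
    (hγ0 : ∀ r : ℕ, 1 ≤ r → 0 ≤ γ r)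
    (hγ2 : ∀ᶠ r : ℕ in atTop, γ r ≤ 1 - 2 / ((r : ℝ) + 1))
    (he : Tendsto e atTop (𝓝 0))
    (hrec : ∀ r : ℕ, 1 ≤ r → |y (r + 1)| ≤ γ r * |y r| + |e r| / ((r : ℝ) + 1)) :
    Tendsto y atTop (𝓝 0) := by
  have hM0 : 0 ≤ M := (abs_nonneg _).trans (hM 1 le_rfl)
  rw [Metric.tendsto_atTop]
  intro ε hε
  have heε : ∀ᶠ r : ℕ in atTop, |e r| ≤ ε := by
    have h2 := Metric.tendsto_atTop.mp he ε hε
    obtain ⟨N, hN⟩ := h2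
    refine eventually_atTop.mpr ⟨N, fun r hr => ?_⟩
    have := hN r hr
    rw [Real.dist_eq, sub_zero] at this
    exact this.le
  obtain ⟨N0, hN0⟩ := eventually_atTop.mp (hγ2.and heε)
  set N := max N0 2 with hNdef
  have hN2 : 2 ≤ N := le_max_right _ _
  have hNR : (2 : ℝ) ≤ (N : ℝ) := by exact_mod_cast hN2
  set A := M * ((N : ℝ) - 1) * N with hA
  have hA0 : 0 ≤ A := by
    apply mul_nonneg (mul_nonneg hM0 (by linarith)) (by linarith)
  have key : ∀ r : ℕ, N ≤ r → |y r| ≤ ε / 2 + A / (((r : ℝ) - 1) * r) := by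
    intro r hr
    induction r, hr using Nat.le_induction with
    | base =>
      have h1 : A / (((N : ℝ) - 1) * N) = M := by
        have e1 : ((N : ℝ) - 1) ≠ 0 := by linarith
        have e2 : ((N : ℝ)) ≠ 0 := by linarith
        rw [hA]
        field_simp
      rw [h1]
      have := hM N (by omega)
      linarith
    | succ r hr IH =>
      have hr1 : 1 ≤ r := by omega
      have hrR : (2 : ℝ) ≤ (r : ℝ) := le_trans hNR (by exact_mod_cast hr)
      have h1 := hrec r hr1
      have h2 := (hN0 r (le_trans (le_max_left _ _) hr)).1
      have h3 := (hN0 r (le_trans (le_max_left _ _) hr)).2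
      have hb0 : (0 : ℝ) ≤ 1 - 2 / ((r : ℝ) + 1) := by
        have : 2 / ((r : ℝ) + 1) ≤ 1 := by
          rw [div_le_one (by linarith)]; linarith
        linarith
      have hden : (0 : ℝ) < ((r : ℝ) - 1) * r := by nlinarith
      have hE0 : (0 : ℝ) ≤ ε / 2 + A / (((r : ℝ) - 1) * r) := by positivity
      have step1 : γ r * |y r| ≤ (1 - 2 / ((r : ℝ) + 1)) * (ε / 2 + A / (((r : ℝ) - 1) * r)) :=
        mul_le_mul h2 IH (abs_nonneg _) hb0
      have step2 : |e r| / ((r : ℝ) + 1) ≤ ε / ((r : ℝ) + 1) :=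
        div_le_div_of_nonneg_right h3 (by linarith)
      have final : (1 - 2 / ((r : ℝ) + 1)) * (ε / 2 + A / (((r : ℝ) - 1) * r)) + ε / ((r : ℝ) + 1)
          = ε / 2 + A / ((((r : ℝ) + 1) - 1) * ((r : ℝ) + 1)) := by
        have e1 : ((r : ℝ) - 1) ≠ 0 := by linarith
        have e2 : ((r : ℝ)) ≠ 0 := by linarith
        have e3 : ((r : ℝ) + 1) ≠ 0 := by linarith
        rw [show ((r : ℝ) + 1) - 1 = r by ring]
        field_simp
        ring
      have : |y (r + 1)| ≤ ε / 2 + A / ((((r : ℝ) + 1) - 1) * ((r : ℝ) + 1)) := by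
        rw [← final]; linarith
      convert this using 3 <;> push_cast <;> ring
  have hAtend : Tendsto (fun r : ℕ => A / (((r : ℝ) - 1) * r)) atTop (𝓝 0) := by
    have h1 : Tendsto (fun r : ℕ => (r : ℝ)) atTop atTop := tendsto_natCast_atTop_atTop
    have h2 : Tendsto (fun r : ℕ => (r : ℝ) - 1) atTop atTop := by
      simpa [sub_eq_add_neg] using tendsto_atTop_add_const_right atTop (-1 : ℝ) h1
    have h3 : Tendsto (fun r : ℕ => ((r : ℝ) - 1) * r) atTop atTop := h2.atTop_mul_atTop₀ h1
    have h4 := h3.inv_tendsto_atTop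
    have h5 : Tendsto (fun r : ℕ => A * (((r : ℝ) - 1) * r)⁻¹) atTop (𝓝 (A * 0)) :=
      h4.const_mul A
    simpa [div_eq_mul_inv] using h5
  have hsmall : ∀ᶠ r : ℕ in atTop, A / (((r : ℝ) - 1) * r) < ε / 2 :=
    hAtend.eventually_lt_const (by linarith)
  obtain ⟨R, hR⟩ := eventually_atTop.mp hsmall
  refine ⟨max N R, fun n hn => ?_⟩
  rw [Real.dist_eq, sub_zero]
  calc |y n| ≤ ε / 2 + A / (((n : ℝ) - 1) * n) := key n (le_trans (le_max_left _ _) hn)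
    _ < ε / 2 + ε / 2 := by
        have := hR n (le_trans (le_max_right _ _) hn)
        linarith
    _ = ε := by ring

end helpers

/-- With `c_r` as before (`τ − c_r ~ 2/(ρΦ''(τ)·r)`) and `d_1 = 1`,
`d_r = ρ·Φ'(c_{r-1})·d_{r-1} + c_r/ρ` for `r > 1`, the sequence `d_r` is increasing,
`d_r = O(r)`, and moreover `d_r ~ (τ/(3ρ))·r` as `r → ∞`. -/
theorem d_seq_asymptotics (w : ℕ → ℝ) (hw : ∀ k, 0 ≤ w k) (hw0 : w 0 = 1)
    (hwk : ∃ k, 1 < k ∧ 0 < w k)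
    (τ : ℝ) (hτ : 0 < τ)
    (hrad : ∃ s, τ < s ∧ Summable fun k => w k * s ^ k)
    (Φ Φd : ℝ → ℝ) (Φdd : ℝ)
    (hΦ : ∀ t, Φ t = ∑' k : ℕ, w k * t ^ k)
    (hΦd : ∀ t, Φd t = ∑' k : ℕ, (k : ℝ) * w k * t ^ (k - 1))
    (hΦdd : Φdd = ∑' k : ℕ, (k : ℝ) * ((k : ℝ) - 1) * w k * τ ^ (k - 2))
    (hcrit : Φ τ = τ * Φd τ)
    (ρ : ℝ) (hρ : ρ = τ / Φ τ) (hρΦd : ρ * Φd τ = 1) (hΦddpos : 0 < Φdd)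
    (c : ℕ → ℝ) (hc1 : c 1 = ρ) (hcrec : ∀ r, 1 ≤ r → c (r + 1) = ρ * Φ (c r))
    (hlim : Tendsto c atTop (𝓝 τ))
    (hcasym : Tendsto (fun r : ℕ => (r : ℝ) * (τ - c r)) atTop (𝓝 (2 / (ρ * Φdd))))
    (d : ℕ → ℝ) (hd1 : d 1 = 1)
    (hdrec : ∀ r, 1 ≤ r → d (r + 1) = ρ * Φd (c r) * d r + c (r + 1) / ρ) :
    (∀ r, 1 ≤ r → d r ≤ d (r + 1)) ∧
      (∃ C : ℝ, ∀ r, 1 ≤ r → d r ≤ C * r) ∧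
      Tendsto (fun r : ℕ => d r / r) atTop (𝓝 (τ / (3 * ρ))) := by
  obtain ⟨s, hτs, hsum_s⟩ := hrad
  have hs0 : 0 < s := hτ.trans hτs
  have hΦsum : ∀ t : ℝ, 0 ≤ t → t ≤ τ → Summable fun k : ℕ => w k * t ^ k := by
    intro t h0 h1
    exact Summable.of_nonneg_of_le (fun k => mul_nonneg (hw k) (pow_nonneg h0 k))
      (fun k => mul_le_mul_of_nonneg_left (pow_le_pow_left₀ h0 (by linarith) k) (hw k)) hsum_s
  have hΦdsum : ∀ t : ℝ, 0 < t → t ≤ τ → Summable fun k : ℕ => (k : ℝ) * w k * t ^ (k - 1) := by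
    intro t h0 h1
    simpa [pow_one] using aux_summable w hw h0 (lt_of_le_of_lt h1 hτs) hsum_s 1
  have hΦge1 : ∀ t, 0 ≤ t → t ≤ τ → 1 ≤ Φ t := by
    intro t h0 h1
    rw [hΦ t]
    have := Summable.le_tsum (hΦsum t h0 h1) 0 fun j _ => mul_nonneg (hw j) (pow_nonneg h0 j)
    simpa [hw0] using this
  have hΦτpos : 0 < Φ τ := lt_of_lt_of_le one_pos (hΦge1 τ hτ.le le_rfl)
  have hρ0 : 0 < ρ := by rw [hρ]; positivity
  have hρne : ρ ≠ 0 := ne_of_gt hρ0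
  have hρτ : ρ ≤ τ := by
    rw [hρ]; exact div_le_self hτ.le (hΦge1 τ hτ.le le_rfl)
  have hρΦτ : ρ * Φ τ = τ := by rw [hρ]; field_simp
  have hΦmono : ∀ x y, 0 ≤ x → x ≤ y → y ≤ τ → Φ x ≤ Φ y := by
    intro x y hx hxy hy
    rw [hΦ x, hΦ y]
    exact Summable.tsum_le_tsum (fun k => mul_le_mul_of_nonneg_left (pow_le_pow_left₀ hx hxy k) (hw k))
      (hΦsum x hx (le_trans hxy hy)) (hΦsum y (le_trans hx hxy) hy)
  have hΦdnonneg : ∀ t : ℝ, 0 ≤ t → 0 ≤ Φd t := by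
    intro t h0
    rw [hΦd t]
    exact tsum_nonneg fun k =>
      mul_nonneg (mul_nonneg (Nat.cast_nonneg k) (hw k)) (pow_nonneg h0 _)
  have hΦdmono : ∀ x y, 0 < x → x ≤ y → y ≤ τ → Φd x ≤ Φd y := by
    intro x y hx hxy hy
    rw [hΦd x, hΦd y]
    refine Summable.tsum_le_tsum (fun k => ?_) (hΦdsum x hx (hxy.trans hy)) (hΦdsum y (hx.trans_le hxy) hy)
    exact mul_le_mul_of_nonneg_left (pow_le_pow_left₀ hx.le hxy _)
      (mul_nonneg (Nat.cast_nonneg k) (hw k))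
  -- facts about c
  have hcbound : ∀ r : ℕ, 1 ≤ r → 0 < c r ∧ c r ≤ τ := by
    intro r hr
    induction r, hr using Nat.le_induction with
    | base => rw [hc1]; exact ⟨hρ0, hρτ⟩
    | succ r hr IH =>
      rw [hcrec r hr]
      constructor
      · have := hΦge1 (c r) IH.1.le IH.2; nlinarith
      · calc ρ * Φ (c r) ≤ ρ * Φ τ :=
            mul_le_mul_of_nonneg_left (hΦmono _ _ IH.1.le IH.2 le_rfl) hρ0.le
          _ = τ := hρΦτ
  have hcmono : ∀ r : ℕ, 1 ≤ r → c r ≤ c (r + 1) := by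
    intro r hr
    induction r, hr using Nat.le_induction with
    | base =>
      rw [hcrec 1 le_rfl, hc1]
      nlinarith [hΦge1 ρ hρ0.le hρτ, hρ0]
    | succ r hr IH =>
      rw [hcrec (r + 1) (by omega)]
      nth_rewrite 1 [hcrec r hr]
      exact mul_le_mul_of_nonneg_left
        (hΦmono _ _ (hcbound r hr).1.le IH (hcbound (r + 1) (by omega)).2) hρ0.le
  have ha0 : ∀ r : ℕ, 1 ≤ r → 0 ≤ ρ * Φd (c r) := fun r hr =>
    mul_nonneg hρ0.le (hΦdnonneg _ (hcbound r hr).1.le)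
  have ha1 : ∀ r : ℕ, 1 ≤ r → ρ * Φd (c r) ≤ 1 := by
    intro r hr
    calc ρ * Φd (c r) ≤ ρ * Φd τ :=
        mul_le_mul_of_nonneg_left (hΦdmono _ _ (hcbound r hr).1 (hcbound r hr).2 le_rfl) hρ0.le
      _ = 1 := hρΦd
  -- facts about d
  have hdnonneg : ∀ r : ℕ, 1 ≤ r → 0 ≤ d r := by
    intro r hr
    induction r, hr using Nat.le_induction with
    | base => rw [hd1]; norm_num
    | succ r hr IH =>
      rw [hdrec r hr]
      exact add_nonneg (mul_nonneg (ha0 r hr) IH)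
        (div_nonneg (hcbound (r + 1) (by omega)).1.le hρ0.le)
  -- Goal 1 : monotone
  have goal1 : ∀ r : ℕ, 1 ≤ r → d r ≤ d (r + 1) := by
    intro r hr
    induction r, hr using Nat.le_induction with
    | base =>
      rw [hdrec 1 le_rfl, hd1, hcrec 1 le_rfl, hc1]
      have h1 : ρ * Φ ρ / ρ = Φ ρ := by field_simp
      rw [h1]
      have h2 := hΦge1 ρ hρ0.le hρτ
      have h3 : 0 ≤ ρ * Φd ρ := mul_nonneg hρ0.le (hΦdnonneg ρ hρ0.le)
      nlinarith
    | succ r hr IH =>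
      have hd2 := hdrec (r + 1) (by omega)
      have hd := hdrec r hr
      rw [hd2]
      nth_rewrite 1 [hd]
      have hmono_a : ρ * Φd (c r) ≤ ρ * Φd (c (r + 1)) :=
        mul_le_mul_of_nonneg_left
          (hΦdmono _ _ (hcbound r hr).1 (hcmono r hr) (hcbound (r + 1) (by omega)).2) hρ0.le
      have h1 : ρ * Φd (c r) * d r ≤ ρ * Φd (c (r + 1)) * d (r + 1) :=
        calc ρ * Φd (c r) * d r ≤ ρ * Φd (c (r + 1)) * d r :=
              mul_le_mul_of_nonneg_right hmono_a (hdnonneg r hr)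
          _ ≤ ρ * Φd (c (r + 1)) * d (r + 1) :=
              mul_le_mul_of_nonneg_left IH (ha0 (r + 1) (by omega))
      have h2 : c (r + 1) / ρ ≤ c (r + 2) / ρ :=
        div_le_div_of_nonneg_right (hcmono (r + 1) (by omega)) hρ0.le
      have h3 : c (r + 1 + 1) = c (r + 2) := by norm_num
      rw [h3]
      linarith
  -- Goal 2 : linear bound
  have hC1 : (1 : ℝ) ≤ 1 + τ / ρ := by
    have : 0 ≤ τ / ρ := by positivity
    linarith
  have goal2 : ∀ r : ℕ, 1 ≤ r → d r ≤ (1 + τ / ρ) * r := by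
    intro r hr
    induction r, hr using Nat.le_induction with
    | base => rw [hd1]; push_cast; linarith
    | succ r hr IH =>
      rw [hdrec r hr]
      have h1 : ρ * Φd (c r) * d r ≤ d r := by
        have := mul_le_mul_of_nonneg_right (ha1 r hr) (hdnonneg r hr)
        linarith [this]
      have h2 : c (r + 1) / ρ ≤ τ / ρ :=
        div_le_div_of_nonneg_right (hcbound (r + 1) (by omega)).2 hρ0.le
      have h3 : d r ≤ (1 + τ / ρ) * r := IH
      push_cast
      nlinarith [hdnonneg r hr]
  -- derivative of Φd at τ
  set s' := (τ + s) / 2 with hs'def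
  have hs'1 : τ < s' := by rw [hs'def]; linarith
  have hs'2 : s' < s := by rw [hs'def]; linarith
  have hs'0 : 0 < s' := hτ.trans hs'1
  have husum : Summable fun k : ℕ => (k : ℝ) ^ 2 * w k * s' ^ (k - 2) :=
    aux_summable w hw hs'0 hs'2 hsum_s 2
  have hg : ∀ (k : ℕ) (y : ℝ), y ∈ Set.Ioo (-s') s' →
      HasDerivAt (fun t : ℝ => (k : ℝ) * w k * t ^ (k - 1))
        ((k : ℝ) * ((k : ℝ) - 1) * w k * y ^ (k - 2)) y := by
    rintro (_ | k) y _
    · simpa using hasDerivAt_const y (0 : ℝ)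
    · have h := (hasDerivAt_pow k y).const_mul ((((k + 1 : ℕ)) : ℝ) * w (k + 1))
      have e3 : (((k + 1 : ℕ)) : ℝ) * ((((k + 1 : ℕ)) : ℝ) - 1) * w (k + 1) * y ^ ((k + 1) - 2)
          = (((k + 1 : ℕ)) : ℝ) * w (k + 1) * ((k : ℝ) * y ^ (k - 1)) := by
        rw [show (k + 1) - 2 = k - 1 from rfl]; push_cast; ring
      rw [e3]
      have e4 : (fun t : ℝ => (((k + 1 : ℕ)) : ℝ) * w (k + 1) * t ^ ((k + 1) - 1))
          = fun t : ℝ => (((k + 1 : ℕ)) : ℝ) * w (k + 1) * t ^ k := rfl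
      rw [e4]
      exact h
  have hg' : ∀ (k : ℕ) (y : ℝ), y ∈ Set.Ioo (-s') s' →
      ‖(k : ℝ) * ((k : ℝ) - 1) * w k * y ^ (k - 2)‖ ≤ (k : ℝ) ^ 2 * w k * s' ^ (k - 2) := by
    rintro (_ | k) y hy
    · simp
    · have hys : |y| ≤ s' := by rw [abs_le]; exact ⟨hy.1.le, hy.2.le⟩
      have h3 : |y| ^ ((k + 1) - 2) ≤ s' ^ ((k + 1) - 2) :=
        pow_le_pow_left₀ (abs_nonneg y) hys _
      rw [Real.norm_eq_abs, abs_mul, abs_mul, abs_mul, abs_of_nonneg (hw (k + 1)), abs_pow]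
      have h5 : |(((k + 1 : ℕ)) : ℝ)| * |(((k + 1 : ℕ)) : ℝ) - 1| ≤ (((k + 1 : ℕ)) : ℝ) ^ 2 := by
        push_cast
        rw [show ((k : ℝ) + 1) - 1 = (k : ℝ) by ring, abs_of_nonneg (by positivity),
          abs_of_nonneg (Nat.cast_nonneg k)]
        nlinarith [Nat.cast_nonneg (α := ℝ) k]
      exact mul_le_mul (mul_le_mul_of_nonneg_right h5 (hw _)) h3 (by positivity)
        (mul_nonneg (by positivity) (hw _))
  have hτmem : τ ∈ Set.Ioo (-s') s' := ⟨by linarith, hs'1⟩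
  have hΦdτsum : Summable fun k : ℕ => (k : ℝ) * w k * τ ^ (k - 1) := hΦdsum τ hτ le_rfl
  have hkey := hasDerivAt_tsum_of_isPreconnected husum isOpen_Ioo
    ((convex_Ioo (-s') s').isPreconnected)
    (g := fun (k : ℕ) (t : ℝ) => (k : ℝ) * w k * t ^ (k - 1))
    (g' := fun (k : ℕ) (y : ℝ) => (k : ℝ) * ((k : ℝ) - 1) * w k * y ^ (k - 2))
    hg hg' hτmem hΦdτsum hτmem
  have hfun : (fun z : ℝ => ∑' k : ℕ, (k : ℝ) * w k * z ^ (k - 1)) = Φd :=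
    funext fun t => (hΦd t).symm
  rw [hfun, ← hΦdd] at hkey
  -- slope convergence
  have hclt : ∀ᶠ r : ℕ in atTop, c r < τ := by
    have h0 : (0 : ℝ) < 2 / (ρ * Φdd) := by positivity
    filter_upwards [hcasym.eventually_const_lt h0] with r hr
    by_contra hcon
    push_neg at hcon
    have : (r : ℝ) * (τ - c r) ≤ 0 :=
      mul_nonpos_of_nonneg_of_nonpos (Nat.cast_nonneg r) (by linarith)
    linarith
  have hcW : Tendsto c atTop (𝓝[≠] τ) :=
    tendsto_nhdsWithin_of_tendsto_nhds_of_eventually_within c hlim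
      (hclt.mono fun r h => by simpa using ne_of_lt h)
  have hslope : Tendsto (fun r : ℕ => slope Φd τ (c r)) atTop (𝓝 Φdd) :=
    (hasDerivAt_iff_tendsto_slope.mp hkey).comp hcW
  have hr2 : Tendsto (fun r : ℕ => (r : ℝ) * (1 - ρ * Φd (c r))) atTop (𝓝 2) := by
    have hmul : Tendsto (fun r : ℕ => ρ * slope Φd τ (c r) * ((r : ℝ) * (τ - c r)))
        atTop (𝓝 (ρ * Φdd * (2 / (ρ * Φdd)))) := (tendsto_const_nhds.mul hslope).mul hcasym
    have hval : ρ * Φdd * (2 / (ρ * Φdd)) = 2 := by field_simp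
    rw [hval] at hmul
    apply hmul.congr'
    filter_upwards [hclt] with r hr
    have hne : c r - τ ≠ 0 := sub_ne_zero.mpr (ne_of_lt hr)
    rw [slope_def_field]
    field_simp
    linear_combination ((r : ℝ) * (c r - τ)) * hρΦd
  -- the contraction setup
  set L := τ / (3 * ρ) with hL
  have hL0 : 0 ≤ L := by rw [hL]; positivity
  set y := fun r : ℕ => d r / (r : ℝ) - L with hy
  set γ := fun r : ℕ => ρ * Φd (c r) * (r : ℝ) / ((r : ℝ) + 1) with hγ
  set e := fun r : ℕ => c (r + 1) / ρ - (1 + (r : ℝ) * (1 - ρ * Φd (c r))) * L with he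
  clear_value L y γ e
  have hγ0 : ∀ r : ℕ, 1 ≤ r → 0 ≤ γ r := by
    intro r hr
    simp only [hγ]
    exact div_nonneg (mul_nonneg (ha0 r hr) (Nat.cast_nonneg r)) (by positivity)
  have hid : ∀ r : ℕ, 1 ≤ r → y (r + 1) = γ r * y r + e r / ((r : ℝ) + 1) := by
    intro r hr
    have hr0 : ((r : ℝ)) ≠ 0 := Nat.cast_ne_zero.mpr (by omega)
    have hr1 : ((r : ℝ) + 1) ≠ 0 := by positivity
    simp only [hy, hγ, he, hL]
    rw [hdrec r hr]
    push_cast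
    field_simp
    ring
  have hrecabs : ∀ r : ℕ, 1 ≤ r → |y (r + 1)| ≤ γ r * |y r| + |e r| / ((r : ℝ) + 1) := by
    intro r hr
    rw [hid r hr]
    calc |γ r * y r + e r / ((r : ℝ) + 1)| ≤ |γ r * y r| + |e r / ((r : ℝ) + 1)| := abs_add_le _ _
      _ = γ r * |y r| + |e r| / ((r : ℝ) + 1) := by
          rw [abs_mul, abs_div, abs_of_nonneg (hγ0 r hr),
            abs_of_nonneg (show (0 : ℝ) ≤ (r : ℝ) + 1 by positivity)]
  have hM : ∀ r : ℕ, 1 ≤ r → |y r| ≤ (1 + τ / ρ) + L := by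
    intro r hr
    have hrpos : (0 : ℝ) < (r : ℝ) := by exact_mod_cast hr
    have h1 : 0 ≤ d r / (r : ℝ) := div_nonneg (hdnonneg r hr) (Nat.cast_nonneg r)
    have h2 : d r / (r : ℝ) ≤ 1 + τ / ρ := by
      rw [div_le_iff₀ hrpos]
      exact goal2 r hr
    simp only [hy]
    rw [abs_le]
    constructor <;> linarith
  have hγ2 : ∀ᶠ r : ℕ in atTop, γ r ≤ 1 - 2 / ((r : ℝ) + 1) := by
    filter_upwards [hr2.eventually_const_lt one_lt_two, eventually_ge_atTop 1] with r h1 hr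
    have hrpos : (0 : ℝ) < (r : ℝ) + 1 := by positivity
    simp only [hγ]
    rw [div_le_iff₀ hrpos]
    have hexp : (1 - 2 / ((r : ℝ) + 1)) * ((r : ℝ) + 1) = (r : ℝ) - 1 := by
      field_simp
      ring
    rw [hexp]
    linarith [h1, (by ring : (r : ℝ) * (1 - ρ * Φd (c r)) = (r : ℝ) - ρ * Φd (c r) * (r : ℝ))]
  have hetend : Tendsto e atTop (𝓝 0) := by
    have h1 : Tendsto (fun r : ℕ => c (r + 1)) atTop (𝓝 τ) := by
      have := hlim.comp (tendsto_add_atTop_nat 1)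
      exact this
    have h2 : Tendsto (fun r : ℕ => c (r + 1) / ρ) atTop (𝓝 (τ / ρ)) := h1.div_const ρ
    have h3 : Tendsto (fun r : ℕ => (1 + (r : ℝ) * (1 - ρ * Φd (c r))) * L)
        atTop (𝓝 ((1 + 2) * L)) := (tendsto_const_nhds.add hr2).mul tendsto_const_nhds
    have h4 := h2.sub h3
    have h5 : τ / ρ - (1 + 2) * L = 0 := by rw [hL]; field_simp; ring
    rw [h5] at h4
    simp only [he]
    exact h4
  have hyzero : Tendsto y atTop (𝓝 0) :=
    aux_contract y γ e ((1 + τ / ρ) + L) hM hγ0 hγ2 hetend hrecabs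
  have hfinal : Tendsto (fun r : ℕ => d r / (r : ℝ)) atTop (𝓝 L) := by
    have h1 : Tendsto (fun r : ℕ => y r + L) atTop (𝓝 (0 + L)) := hyzero.add_const L
    rw [zero_add] at h1
    refine h1.congr fun r => ?_
    simp only [hy]
    ring
  exact ⟨goal1, ⟨1 + τ / ρ, goal2⟩, hfinal⟩
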